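/- Let T be a tree with t ≥ 3 nodes. Then there exists a family of at most ⌊t/2⌋ triplets (connected 3-node subtrees) covering all nodes of T such that the associated triplets graph is connected. -/

import Mathlib

open SimpleGraph Finset Function

variable {V : Type} [DecidableEq V] {G : SimpleGraph V}

/-- In a tree, every path realizes the distance. -/
lemma tree_path_length_eq_dist (hT : G.IsTree) {x y : V} (P : G.Walk x y) (hP : P.IsPath) :
    P.length = G.dist x y := by
  obtain ⟨W, hW⟩ := hT.isConnected.exists_walk_length_eq_dist x y
  have h1 : P = W.bypass := by
    obtain ⟨Q, _, hQ⟩ := hT.existsUnique_path x y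
    rw [hQ P hP, hQ W.bypass W.bypass_isPath]
  refine le_antisymm ?_ (SimpleGraph.dist_le P)
  rw [h1, ← hW]
  exact W.length_bypass_le

/-- The second vertex of a nontrivial walk is adjacent to the start and lies in the support. -/
lemma adj_getVert_one {x y : V} {W : G.Walk x y} (h : x ≠ y) :
    G.Adj x (W.getVert 1) ∧ W.getVert 1 ∈ W.support := by
  obtain ⟨z, hz, Q, rfl⟩ := W.exists_eq_cons_of_ne h
  rw [SimpleGraph.Walk.getVert_cons_succ, SimpleGraph.Walk.getVert_zero]
  exact ⟨hz, by simp⟩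

set_option linter.unusedSectionVars false

/-- An interior vertex of a path has two distinct neighbors on the path. -/
lemma interior_two_neighbors {x y z : V} {W : G.Walk x y} (hW : W.IsPath)
    (hz : z ∈ W.support) (hzx : z ≠ x) (hzy : z ≠ y) :
    ∃ a b, a ≠ b ∧ G.Adj z a ∧ G.Adj z b ∧ a ∈ W.support ∧ b ∈ W.support := by
  set W1 := W.takeUntil z hz with hW1
  set W2 := W.dropUntil z hz with hW2
  have hspec : W1.append W2 = W := W.take_spec hz
  have hsup : W.support = W1.support ++ W2.support.tail := by
    rw [← hspec, SimpleGraph.Walk.support_append]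
  obtain ⟨a, ha, Q, hQ⟩ := W2.exists_eq_cons_of_ne hzy
  obtain ⟨b, hb, R, hR⟩ := W1.reverse.exists_eq_cons_of_ne hzx
  have haW2 : a ∈ W2.support.tail := by
    rw [hQ, SimpleGraph.Walk.support_cons]
    exact Q.start_mem_support
  have hbW1 : b ∈ W1.support := by
    have : b ∈ W1.reverse.support := by
      rw [hR, SimpleGraph.Walk.support_cons]
      exact List.mem_cons_of_mem _ R.start_mem_support
    rwa [SimpleGraph.Walk.support_reverse, List.mem_reverse] at this
  have hnd := hW.support_nodup
  rw [hsup] at hnd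
  have hdisj := (List.nodup_append'.mp hnd).2.2
  refine ⟨a, b, ?_, ha, hb, ?_, ?_⟩
  · rintro rfl
    exact hdisj hbW1 haW2
  · rw [hsup]; exact List.mem_append_right _ haW2
  · rw [hsup]; exact List.mem_append_left _ hbW1

lemma isPath_concat' {x y z : V} {P : G.Walk x y} (hP : P.IsPath) (h : G.Adj y z)
    (hz : z ∉ P.support) : (P.concat h).IsPath := by
  have h1 : (SimpleGraph.Walk.cons h.symm P.reverse).IsPath := by
    rw [SimpleGraph.Walk.cons_isPath_iff]
    exact ⟨hP.reverse, by rwa [SimpleGraph.Walk.support_reverse, List.mem_reverse]⟩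
  have h2 := h1.reverse
  rwa [SimpleGraph.Walk.reverse_cons, SimpleGraph.Walk.reverse_reverse] at h2

/-- If `x` is on a path from `r` then `dist r x ≤ ` length of that path, in a tree. -/
lemma dist_le_of_mem_support (hT : G.IsTree) {r w x : V} {Q : G.Walk r w} (hQ : Q.IsPath)
    (hx : x ∈ Q.support) : G.dist r x ≤ Q.length := by
  have h1 : (Q.takeUntil x hx).length = G.dist r x :=
    tree_path_length_eq_dist hT _ (hQ.takeUntil hx)
  rw [← h1]
  exact Q.length_takeUntil_le hx

/-- In a tree, adjacent vertices are at different distances from any root. -/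
lemma tree_dist_ne_of_adj (hT : G.IsTree) (r : V) {x y : V} (hxy : G.Adj x y) :
    G.dist r x ≠ G.dist r y := by
  intro hk
  -- wlog-free: derive a contradiction directly
  obtain ⟨P, hP, -⟩ := hT.existsUnique_path r x
  have hPl : P.length = G.dist r x := tree_path_length_eq_dist hT P hP
  have hy : y ∉ P.support := by
    intro hy
    have h1 : (P.takeUntil y hy).length = G.dist r y :=
      tree_path_length_eq_dist hT _ (hP.takeUntil hy)
    have h2 : (P.takeUntil y hy).length + (P.dropUntil y hy).length = P.length := by
      conv_rhs => rw [← P.take_spec hy]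
      rw [SimpleGraph.Walk.length_append]
    have h3 : (P.dropUntil y hy).length = 0 := by omega
    exact hxy.ne' (SimpleGraph.Walk.eq_of_length_eq_zero h3)
  have hconc : (P.concat hxy).IsPath := isPath_concat' hP hxy hy
  have := tree_path_length_eq_dist hT _ hconc
  rw [SimpleGraph.Walk.length_concat, hPl] at this
  omega

/-- In a tree, a vertex has at most one neighbor closer to the root. -/
lemma lower_neighbor_unique (hT : G.IsTree) {r x w w' : V} (hw : G.Adj x w) (hw' : G.Adj x w')
    (h1 : G.dist r w < G.dist r x) (h2 : G.dist r w' < G.dist r x) : w = w' := by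
  obtain ⟨Q, hQ, -⟩ := hT.existsUnique_path r w
  obtain ⟨Q', hQ', -⟩ := hT.existsUnique_path r w'
  have hxQ : x ∉ Q.support := fun hx => absurd (dist_le_of_mem_support hT hQ hx)
    (by rw [tree_path_length_eq_dist hT Q hQ]; omega)
  have hxQ' : x ∉ Q'.support := fun hx => absurd (dist_le_of_mem_support hT hQ' hx)
    (by rw [tree_path_length_eq_dist hT Q' hQ']; omega)
  have hc : (Q.concat hw.symm).IsPath := isPath_concat' hQ hw.symm hxQ
  have hc' : (Q'.concat hw'.symm).IsPath := isPath_concat' hQ' hw'.symm hxQ'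
  obtain ⟨P, -, hPu⟩ := hT.existsUnique_path r x
  have heq : Q.concat hw.symm = Q'.concat hw'.symm := by
    rw [hPu _ hc, hPu _ hc']
  obtain ⟨hv, -⟩ := SimpleGraph.Walk.concat_inj heq
  exact hv

/-- Every non-root vertex of a tree has a neighbor strictly closer to the root. -/
lemma exists_lower_neighbor (hT : G.IsTree) {r x : V} (h : x ≠ r) :
    ∃ q, G.Adj x q ∧ G.dist r q + 1 = G.dist r x := by
  obtain ⟨P, hP, -⟩ := hT.existsUnique_path r x
  obtain ⟨q, hq, R, hR⟩ := P.reverse.exists_eq_cons_of_ne h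
  have hqsup : q ∈ P.support := by
    have : q ∈ P.reverse.support := by rw [hR]; simp
    rwa [SimpleGraph.Walk.support_reverse, List.mem_reverse] at this
  have h1 : G.dist r q ≤ G.dist r x := by
    have := dist_le_of_mem_support hT hP hqsup
    rwa [tree_path_length_eq_dist hT P hP] at this
  have h2 : G.dist r x ≤ G.dist r q + 1 := by
    obtain ⟨Q, hQ, -⟩ := hT.existsUnique_path r q
    have := SimpleGraph.dist_le (Q.concat hq.symm)
    rwa [SimpleGraph.Walk.length_concat, tree_path_length_eq_dist hT Q hQ] at this
  have h3 := tree_dist_ne_of_adj hT r hq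
  exact ⟨q, hq, by omega⟩

/-- Deepest-vertex structure: a vertex of maximal distance from the root is a leaf. -/
lemma deepest_structure (hT : G.IsTree) {r u : V} (hmax : ∀ v, G.dist r v ≤ G.dist r u)
    (hu : u ≠ r) :
    ∃ p, G.Adj u p ∧ (∀ w, G.Adj u w → w = p) ∧ G.dist r p + 1 = G.dist r u := by
  obtain ⟨p, hp, hpd⟩ := exists_lower_neighbor hT hu
  refine ⟨p, hp, fun w hw => ?_, hpd⟩
  have h1 : G.dist r w ≠ G.dist r u := tree_dist_ne_of_adj hT r hw.symm
  have h2 : G.dist r w ≤ G.dist r u := hmax w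
  exact lower_neighbor_unique hT (r := r) hw hp (by omega) (by omega)

lemma adj_of_dist_eq_one (hc : G.Connected) {x y : V} (h : G.dist x y = 1) : G.Adj x y := by
  obtain ⟨W, hW⟩ := hc.exists_walk_length_eq_dist x y
  rw [h] at hW
  cases W with
  | nil => simp at hW
  | cons h' W' =>
    rw [SimpleGraph.Walk.length_cons] at hW
    have : W'.length = 0 := by omega
    have := SimpleGraph.Walk.eq_of_length_eq_zero this
    rwa [← this]

lemma dist_eq_one_of_adj (hT : G.IsTree) {x y : V} (h : G.Adj x y) : G.dist x y = 1 := by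
  have h1 := SimpleGraph.dist_le h.toWalk
  have h2 := hT.isConnected.pos_dist_of_ne h.ne
  simp only [SimpleGraph.Walk.length_cons, SimpleGraph.Walk.length_nil] at h1
  omega

/-- Structure lemma: a tree on at least 3 vertices has a leaf `u` with neighbor `p` such that
either `p` has another leaf neighbor, or `p` has degree two. -/
lemma tree_structure [Fintype V] (hT : G.IsTree) (h3 : 3 ≤ Fintype.card V) :
    ∃ u p : V, G.Adj u p ∧ (∀ w, G.Adj u w → w = p) ∧
      ((∃ u', u' ≠ u ∧ G.Adj p u' ∧ (∀ w, G.Adj u' w → w = p)) ∨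
       (∃ q, q ≠ u ∧ G.Adj p q ∧ (∀ w, G.Adj p w → w = u ∨ w = q))) := by
  have hne : Nonempty V := hT.isConnected.nonempty
  obtain ⟨r⟩ := hne
  obtain ⟨u, -, hmax'⟩ := Finset.exists_max_image Finset.univ (fun v => G.dist r v)
    ⟨r, Finset.mem_univ r⟩
  have hmax : ∀ v, G.dist r v ≤ G.dist r u := fun v => hmax' v (Finset.mem_univ v)
  have hd1 : 1 ≤ G.dist r u := by
    obtain ⟨v, hv⟩ := Fintype.exists_ne_of_one_lt_card (by omega) r
    have := hT.isConnected.pos_dist_of_ne (Ne.symm hv)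
    have := hmax v
    omega
  have hur : u ≠ r := by
    intro h; rw [h] at hd1; simp [SimpleGraph.dist_self] at hd1
  obtain ⟨p, hup, hponly, hpd⟩ := deepest_structure hT hmax hur
  refine ⟨u, p, hup, hponly, ?_⟩
  by_cases hA : ∃ u', u' ≠ u ∧ G.Adj p u' ∧ G.dist r u' = G.dist r u
  · obtain ⟨u', hu'u, hpu', hu'd⟩ := hA
    have hu'r : u' ≠ r := by
      intro h; rw [h] at hu'd; rw [SimpleGraph.dist_self] at hu'd; omega
    have hmax' : ∀ v, G.dist r v ≤ G.dist r u' := by rw [hu'd]; exact hmax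
    obtain ⟨p'', hu'p'', honly'', -⟩ := deepest_structure hT hmax' hu'r
    have : p = p'' := honly'' p hpu'.symm
    exact Or.inl ⟨u', hu'u, hpu', this ▸ honly''⟩
  · push_neg at hA
    have hpr : p ≠ r := by
      intro h
      have hd : G.dist r u = 1 := by
        rw [h, SimpleGraph.dist_self] at hpd; omega
      have hv : ∃ v, v ≠ u ∧ v ≠ r := by
        have hle : ({u, r} : Finset V).card ≤ 2 := by
          have := Finset.card_insert_le u ({r} : Finset V)
          simp only [Finset.card_singleton] at this
          omega
        have hcompl : (({u, r} : Finset V)ᶜ).Nonempty := by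
          rw [← Finset.card_pos, Finset.card_compl]
          omega
        obtain ⟨v, hv⟩ := hcompl
        simp only [Finset.mem_compl, Finset.mem_insert, Finset.mem_singleton, not_or] at hv
        exact ⟨v, hv.1, hv.2⟩
      obtain ⟨v, hvu, hvr⟩ := hv
      have hvd : G.dist r v = 1 := by
        have h1 := hmax v
        have h2 := hT.isConnected.pos_dist_of_ne (Ne.symm hvr)
        omega
      exact hA v hvu (h ▸ adj_of_dist_eq_one hT.isConnected hvd) (by omega)
    obtain ⟨q, hpq, hqd⟩ := exists_lower_neighbor hT hpr
    have hqu : q ≠ u := by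
      intro h; rw [h] at hqd; omega
    refine Or.inr ⟨q, hqu, hpq, fun w hw => ?_⟩
    have hwd : G.dist r w ≤ G.dist r u := hmax w
    have hwne : G.dist r w ≠ G.dist r p := tree_dist_ne_of_adj hT r hw.symm
    rcases Nat.lt_or_ge (G.dist r w) (G.dist r p) with hlt | hge
    · exact Or.inr (lower_neighbor_unique hT (r := r) hw hpq hlt (by omega))
    · left
      by_contra hwu
      exact hA w hwu hw (by omega)

lemma induce_acyclic {S : Set V} (h : G.IsAcyclic) : (G.induce S).IsAcyclic := by
  intro v c hc
  exact h (c.map (SimpleGraph.Embedding.induce S).toHom) (hc.map Subtype.val_injective)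

lemma reachable_induce_of_support {S : Set V} {x y : V} (W : G.Walk x y)
    (hsup : ∀ z ∈ W.support, z ∈ S) (hx : x ∈ S) (hy : y ∈ S) :
    (G.induce S).Reachable ⟨x, hx⟩ ⟨y, hy⟩ := by
  induction W with
  | nil => rfl
  | @cons a b c h W ih =>
    have hb : b ∈ S := hsup b (by simp)
    have hadj : (G.induce S).Adj ⟨a, hx⟩ ⟨b, hb⟩ := h
    exact hadj.reachable.trans (ih (fun z hz => hsup z (by simp [hz])) hb hy)

lemma induce_isTree {S : Set V} (hT : G.IsTree) (hne : S.Nonempty)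
    (hwalk : ∀ x, x ∈ S → ∀ y, y ∈ S → ∃ W : G.Walk x y, ∀ z ∈ W.support, z ∈ S) :
    (G.induce S).IsTree := by
  constructor
  · have : Nonempty ↥S := hne.to_subtype
    constructor
    rintro ⟨x, hx⟩ ⟨y, hy⟩
    obtain ⟨W, hW⟩ := hwalk x hx y hy
    exact reachable_induce_of_support W hW hx hy
  · exact induce_acyclic hT.IsAcyclic

lemma leaf_not_mem_path_support {u p x y : V} (hleaf : ∀ w, G.Adj u w → w = p)
    (hx : x ≠ u) (hy : y ≠ u) {W : G.Walk x y} (hW : W.IsPath) : u ∉ W.support := by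
  intro hu
  obtain ⟨a, b, hab, ha, hb, -, -⟩ := interior_two_neighbors hW hu (Ne.symm hx) (Ne.symm hy)
  exact hab ((hleaf a ha).trans (hleaf b hb).symm)

lemma deg2_not_mem_path_support {u p q x y : V} (hleaf : ∀ w, G.Adj u w → w = p)
    (hdeg : ∀ w, G.Adj p w → w = u ∨ w = q)
    (hx : x ≠ u) (hy : y ≠ u) (hx' : x ≠ p) (hy' : y ≠ p) {W : G.Walk x y} (hW : W.IsPath) :
    p ∉ W.support := by
  intro hp
  have hu : u ∉ W.support := leaf_not_mem_path_support hleaf hx hy hW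
  obtain ⟨a, b, hab, ha, hb, haS, hbS⟩ := interior_two_neighbors hW hp (Ne.symm hx') (Ne.symm hy')
  rcases hdeg a ha with rfl | rfl
  · exact hu haS
  · rcases hdeg b hb with rfl | rfl
    · exact hu hbS
    · exact hab rfl

lemma triplet_connected {a b c : V} (hca : G.Adj c a) (hcb : G.Adj c b) :
    (G.induce (↑({a, b, c} : Finset V) : Set V)).Connected := by
  rw [SimpleGraph.connected_iff_exists_forall_reachable]
  refine ⟨⟨c, by simp⟩, ?_⟩
  rintro ⟨w, hw⟩
  simp only [Finset.coe_insert, Set.mem_insert_iff, Finset.coe_singleton,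
    Set.mem_singleton_iff] at hw
  rcases hw with rfl | rfl | rfl
  · have hadj : (G.induce (↑({w, b, c} : Finset V) : Set V)).Adj ⟨c, by simp⟩ ⟨w, by simp⟩ := hca
    exact hadj.reachable
  · have hadj : (G.induce (↑({a, w, c} : Finset V) : Set V)).Adj ⟨c, by simp⟩ ⟨w, by simp⟩ := hcb
    exact hadj.reachable
  · rfl

lemma induce_induce_connected {S : Set V} (t : Finset ↥S)
    (h : ((G.induce S).induce (↑t : Set ↥S)).Connected) :
    (G.induce (↑(t.map (Function.Embedding.subtype _)) : Set V)).Connected := by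
  refine h.map ⟨fun v => ⟨v.1.1, ?_⟩, fun {a b} hab => hab⟩ ?_
  · exact Finset.mem_coe.mpr (Finset.mem_map.mpr ⟨v.1, Finset.mem_coe.mp v.2, rfl⟩)
  · rintro ⟨x, hx⟩
    obtain ⟨a, ha, rfl⟩ := Finset.mem_map.mp (Finset.mem_coe.mp hx)
    exact ⟨⟨a, Finset.mem_coe.mpr ha⟩, rfl⟩

/-- Main auxiliary induction. -/
theorem aux_main : ∀ n : ℕ, ∀ (V : Type) [Fintype V] [DecidableEq V] (G : SimpleGraph V),
    G.IsTree → 3 ≤ Fintype.card V → Fintype.card V = n →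
    ∃ F : Finset (Finset V),
      F.card ≤ Fintype.card V / 2 ∧
      (∀ s ∈ F, s.card = 3 ∧ (G.induce (↑s : Set V)).Connected) ∧
      (∀ v : V, ∃ s ∈ F, v ∈ s) ∧
      (SimpleGraph.fromRel (fun a b : ↥F => ((a : Finset V) ∩ (b : Finset V)).Nonempty)).Connected := by
  intro n
  induction n using Nat.strong_induction_on with
  | _ n ih =>
    intro V _ _ G hT h3 hcard
    rcases Nat.lt_or_ge n 4 with h4 | h4
    · -- base case: n = 3
      refine ⟨{Finset.univ}, ?_, ?_, ?_, ?_⟩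
      · rw [Finset.card_singleton]; omega
      · intro s hs
        rw [Finset.mem_singleton] at hs
        subst hs
        refine ⟨by rw [Finset.card_univ]; omega, ?_⟩
        rw [Finset.coe_univ]
        exact (SimpleGraph.induceUnivIso G).connected_iff.mpr hT.isConnected
      · exact fun v => ⟨Finset.univ, Finset.mem_singleton_self _, Finset.mem_univ v⟩
      · haveI : Nonempty ↥({Finset.univ} : Finset (Finset V)) :=
          ⟨⟨Finset.univ, Finset.mem_singleton_self _⟩⟩
        constructor
        intro a b
        have : a = b := Subtype.ext (by
          rw [Finset.mem_singleton.mp a.2, Finset.mem_singleton.mp b.2])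
        rw [this]
    · -- n ≥ 4 : obtain the structure and unified data
      obtain ⟨u, p, hup, huleaf, hcase⟩ := tree_structure hT h3
      obtain ⟨x₂, c, hx₂u, hcu, hcx₂, hadj_cx₂, hunbr, hx₂nbr, hs₀conn, havoid⟩ :
          ∃ x₂ c : V, x₂ ≠ u ∧ c ≠ u ∧ c ≠ x₂ ∧ G.Adj c x₂ ∧
            (∀ z, G.Adj u z → z = x₂ ∨ z = c) ∧
            (∀ z, G.Adj x₂ z → z = u ∨ z = c) ∧
            (G.induce (↑({u, x₂, c} : Finset V) : Set V)).Connected ∧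
            (∀ (x y : V) (W : G.Walk x y), W.IsPath → x ≠ u → x ≠ x₂ → y ≠ u → y ≠ x₂ →
              u ∉ W.support ∧ x₂ ∉ W.support) := by
        rcases hcase with ⟨u', hu'u, hpu', hu'leaf⟩ | ⟨q, hqu, hpq, hdeg⟩
        · refine ⟨u', p, hu'u, hup.ne', hpu'.ne, hpu', ?_, ?_, ?_, ?_⟩
          · intro z hz; exact Or.inr (huleaf z hz)
          · intro z hz; exact Or.inr (hu'leaf z hz)
          · exact triplet_connected hup.symm hpu'
          · intro x y W hW hxu hxx₂ hyu hyx₂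
            exact ⟨leaf_not_mem_path_support huleaf (fun h => hxu h) (fun h => hyu h) hW,
              leaf_not_mem_path_support hu'leaf (fun h => hxx₂ h) (fun h => hyx₂ h) hW⟩
        · refine ⟨p, q, hup.ne', hqu, hpq.ne', hpq.symm, ?_, ?_, ?_, ?_⟩
          · intro z hz; exact Or.inl (huleaf z hz)
          · exact hdeg
          · rw [Finset.pair_comm p q]
            exact triplet_connected hup.symm hpq
          · intro x y W hW hxu hxx₂ hyu hyx₂
            exact ⟨leaf_not_mem_path_support huleaf hxu hyu hW,
              deg2_not_mem_path_support huleaf hdeg hxu hyu hxx₂ hyx₂ hW⟩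
      have hs₀card : ({u, x₂, c} : Finset V).card = 3 := by
        rw [Finset.card_insert_of_notMem (by simp [Ne.symm hx₂u, Ne.symm hcu]),
          Finset.card_insert_of_notMem (by simp [Ne.symm hcx₂]), Finset.card_singleton]
      rcases Nat.lt_or_ge n 5 with h5 | h5
      · -- n = 4
        have hn4 : Fintype.card V = 4 := by omega
        -- find the fourth vertex
        have hcompl : ((({u, x₂, c} : Finset V))ᶜ).Nonempty := by
          rw [← Finset.card_pos, Finset.card_compl, hs₀card]; omega
        obtain ⟨w, hw⟩ := hcompl
        simp only [Finset.mem_compl, Finset.mem_insert, Finset.mem_singleton, not_or] at hw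
        obtain ⟨hwu, hwx₂, hwc⟩ := hw
        have huniv : ({u, x₂, c, w} : Finset V) = Finset.univ := by
          apply Finset.eq_univ_of_card
          rw [hn4, Finset.card_insert_of_notMem (by
            simp [Ne.symm hx₂u, Ne.symm hcu, Ne.symm hwu]),
            Finset.card_insert_of_notMem (by simp [Ne.symm hcx₂, Ne.symm hwx₂]),
            Finset.card_insert_of_notMem (by simp [Ne.symm hwc]), Finset.card_singleton]
        obtain ⟨z, hwz, -⟩ := exists_lower_neighbor hT (r := u) hwu
        have hzmem : z ∈ ({u, x₂, c, w} : Finset V) := huniv ▸ Finset.mem_univ z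
        have hzw : z ≠ w := hwz.ne'
        have hzc : z = c := by
          simp only [Finset.mem_insert, Finset.mem_singleton] at hzmem
          rcases hzmem with rfl | rfl | rfl | rfl
          · rcases hunbr w hwz.symm with h | h
            · exact absurd h hwx₂
            · exact absurd h hwc
          · rcases hx₂nbr w hwz.symm with h | h
            · exact absurd h hwu
            · exact absurd h hwc
          · rfl
          · exact absurd rfl hzw
        have hadj_cw : G.Adj c w := hzc ▸ hwz.symm
        -- s₁
        have hs₁conn : (G.induce (↑({w, x₂, c} : Finset V) : Set V)).Connected :=
          triplet_connected hadj_cw hadj_cx₂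
        have hs₁card : ({w, x₂, c} : Finset V).card = 3 := by
          rw [Finset.card_insert_of_notMem (by simp [hwx₂, hwc]),
            Finset.card_insert_of_notMem (by simp [Ne.symm hcx₂]), Finset.card_singleton]
        have hne01 : ({u, x₂, c} : Finset V) ≠ ({w, x₂, c} : Finset V) := by
          intro h
          have : u ∈ ({w, x₂, c} : Finset V) := h ▸ Finset.mem_insert_self u {x₂, c}
          simp only [Finset.mem_insert, Finset.mem_singleton] at this
          rcases this with rfl | rfl | rfl
          · exact hwu rfl
          · exact hx₂u rfl
          · exact hcu rfl
        refine ⟨{({u, x₂, c} : Finset V), ({w, x₂, c} : Finset V)}, ?_, ?_, ?_, ?_⟩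
        · have := Finset.card_insert_le ({u, x₂, c} : Finset V) {({w, x₂, c} : Finset V)}
          rw [Finset.card_singleton] at this
          omega
        · intro s hs
          simp only [Finset.mem_insert, Finset.mem_singleton] at hs
          rcases hs with rfl | rfl
          · exact ⟨hs₀card, hs₀conn⟩
          · exact ⟨hs₁card, hs₁conn⟩
        · intro v
          have hv : v ∈ ({u, x₂, c, w} : Finset V) := huniv ▸ Finset.mem_univ v
          simp only [Finset.mem_insert, Finset.mem_singleton] at hv
          rcases hv with hv | hv | hv | hv
          · exact ⟨{u, x₂, c}, by simp, by rw [hv]; simp⟩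
          · exact ⟨{u, x₂, c}, by simp, by rw [hv]; simp⟩
          · exact ⟨{u, x₂, c}, by simp, by rw [hv]; simp⟩
          · exact ⟨{w, x₂, c}, by simp, by rw [hv]; simp⟩
        · haveI hne : Nonempty ↥({({u, x₂, c} : Finset V), ({w, x₂, c} : Finset V)} :
              Finset (Finset V)) := ⟨⟨_, Finset.mem_insert_self _ _⟩⟩
          constructor
          intro a b
          by_cases hab : (a : Finset V) = (b : Finset V)
          · rw [Subtype.ext hab]
          · apply SimpleGraph.Adj.reachable
            rw [SimpleGraph.fromRel_adj]
            refine ⟨fun h => hab (congrArg Subtype.val h), Or.inl ⟨c, ?_⟩⟩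
            have hx := a.2
            have hy := b.2
            simp only [Finset.mem_insert, Finset.mem_singleton] at hx hy
            have hcmem : ∀ s : Finset V, s = {u, x₂, c} ∨ s = {w, x₂, c} → c ∈ s := by
              rintro s (rfl | rfl) <;> simp
            exact Finset.mem_inter.mpr ⟨hcmem _ hx, hcmem _ hy⟩
      · -- n ≥ 5 : inductive step
        set Sf : Finset V := ({u, x₂} : Finset V)ᶜ with hSf
        have hmemSf : ∀ z : V, z ∈ Sf ↔ z ≠ u ∧ z ≠ x₂ := by
          intro z; simp [hSf, not_or]
        have hcardSf : Fintype.card ↥(↑Sf : Set V) = n - 2 := by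
          have h1 : Fintype.card ↥(↑Sf : Set V) = Sf.card := Fintype.card_coe Sf
          rw [h1, hSf, Finset.card_compl,
            Finset.card_insert_of_notMem (by simp [Ne.symm hx₂u]), Finset.card_singleton, hcard]
        have hcS : c ∈ Sf := (hmemSf c).mpr ⟨hcu, hcx₂⟩
        have hTree' : (G.induce (↑Sf : Set V)).IsTree := by
          refine induce_isTree hT ⟨c, hcS⟩ ?_
          intro x hx y hy
          obtain ⟨P, hP, -⟩ := hT.existsUnique_path x y
          rw [Finset.mem_coe, hmemSf] at hx hy
          obtain ⟨hu', hx₂'⟩ := havoid x y P hP hx.1 hx.2 hy.1 hy.2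
          refine ⟨P, fun z hz => ?_⟩
          rw [Finset.mem_coe, hmemSf]
          exact ⟨fun h => hu' (h ▸ hz), fun h => hx₂' (h ▸ hz)⟩
        obtain ⟨F', hF'card, hF'trip, hF'cov, hF'conn⟩ :=
          ih (n - 2) (by omega) ↥(↑Sf : Set V) (G.induce (↑Sf : Set V)) hTree'
            (by omega) hcardSf
        -- transfer the family
        set emb : ↥(↑Sf : Set V) ↪ V := Function.Embedding.subtype _ with hemb
        set mapF : Finset ↥(↑Sf : Set V) → Finset V := fun t => t.map emb with hmapF
        set s₀ : Finset V := {u, x₂, c} with hs₀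
        set F : Finset (Finset V) := insert s₀ (F'.image mapF) with hF
        have hnotu : ∀ t : Finset ↥(↑Sf : Set V), u ∉ mapF t := by
          intro t ht
          obtain ⟨z, -, hz⟩ := Finset.mem_map.mp ht
          have h1 : (z : V) ∈ Sf := Finset.mem_coe.mp z.2
          rw [hmemSf] at h1
          exact h1.1 (by simpa [hemb] using hz)
        have hs₀F : s₀ ∈ F := Finset.mem_insert_self _ _
        have hus₀ : u ∈ s₀ := by rw [hs₀]; simp
        have hcs₀ : c ∈ s₀ := by rw [hs₀]; simp
        have hmapmem : ∀ t ∈ F', mapF t ∈ F :=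
          fun t ht => Finset.mem_insert_of_mem (Finset.mem_image_of_mem _ ht)
        refine ⟨F, ?_, ?_, ?_, ?_⟩
        · have h1 : F.card ≤ (F'.image mapF).card + 1 := by
            rw [hF]; exact Finset.card_insert_le _ _
          have h2 := Finset.card_image_le (f := mapF) (s := F')
          rw [hcardSf] at hF'card
          rw [hcard]
          omega
        · intro s hs
          rcases Finset.mem_insert.mp (hF ▸ hs) with rfl | hs'
          · exact ⟨hs₀card, hs₀conn⟩
          · obtain ⟨t, ht, rfl⟩ := Finset.mem_image.mp hs'
            constructor
            · simp only [hmapF, Finset.card_map]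
              exact (hF'trip t ht).1
            · exact induce_induce_connected t (hF'trip t ht).2
        · intro v
          by_cases hvu : v = u
          · exact ⟨s₀, hs₀F, by rw [hvu]; exact hus₀⟩
          by_cases hvx₂ : v = x₂
          · exact ⟨s₀, hs₀F, by rw [hvx₂, hs₀]; simp⟩
          · have hvS : v ∈ (↑Sf : Set V) := Finset.mem_coe.mpr ((hmemSf v).mpr ⟨hvu, hvx₂⟩)
            obtain ⟨t, ht, hvt⟩ := hF'cov ⟨v, hvS⟩
            refine ⟨mapF t, hmapmem t ht, ?_⟩
            simp only [hmapF]
            exact Finset.mem_map.mpr ⟨⟨v, hvS⟩, hvt, rfl⟩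
        · have hφrel : ∀ a b : ↥F',
              (SimpleGraph.fromRel fun a b : ↥F' =>
                ((a : Finset ↥(↑Sf : Set V)) ∩ (b : Finset ↥(↑Sf : Set V))).Nonempty).Adj a b →
              (SimpleGraph.fromRel fun a b : ↥F =>
                ((a : Finset V) ∩ (b : Finset V)).Nonempty).Adj
                ⟨mapF a.1, hmapmem a.1 a.2⟩ ⟨mapF b.1, hmapmem b.1 b.2⟩ := by
            intro a b hab
            rw [SimpleGraph.fromRel_adj] at hab ⊢
            constructor
            · intro h
              apply hab.1
              apply Subtype.ext
              have h1 : mapF a.1 = mapF b.1 := congrArg Subtype.val h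
              simp only [hmapF] at h1
              exact Finset.map_injective emb h1
            · have hx : ((a : Finset ↥(↑Sf : Set V)) ∩ (b : Finset ↥(↑Sf : Set V))).Nonempty := by
                rcases hab.2 with h | h
                · exact h
                · rwa [Finset.inter_comm] at h
              obtain ⟨x, hx⟩ := hx
              rw [Finset.mem_inter] at hx
              refine Or.inl ⟨(x : V), Finset.mem_inter.mpr ⟨?_, ?_⟩⟩
              · simp only [hmapF]; exact Finset.mem_map_of_mem emb hx.1
              · simp only [hmapF]; exact Finset.mem_map_of_mem emb hx.2
          have hcSet : c ∈ (↑Sf : Set V) := Finset.mem_coe.mpr hcS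
          obtain ⟨tc, htc, hctc⟩ := hF'cov ⟨c, hcSet⟩
          let φ : ↥F' → ↥F := fun t => ⟨mapF t.1, hmapmem t.1 t.2⟩
          have hreach0 : ∀ t : ↥F',
              (SimpleGraph.fromRel fun a b : ↥F =>
                ((a : Finset V) ∩ (b : Finset V)).Nonempty).Reachable (φ t) (φ ⟨tc, htc⟩) := by
            intro t
            exact SimpleGraph.Reachable.map
              ⟨φ, fun {a b} h => hφrel a b h⟩ (hF'conn.preconnected t ⟨tc, htc⟩)
          have hs₀ne : ∀ t : ↥F', φ t ≠ ⟨s₀, hs₀F⟩ := by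
            intro t h
            have h1 : s₀ = mapF t.1 := (congrArg Subtype.val h).symm
            exact hnotu t.1 (by rw [← h1]; exact hus₀)
          have hedge : (SimpleGraph.fromRel fun a b : ↥F =>
              ((a : Finset V) ∩ (b : Finset V)).Nonempty).Adj (φ ⟨tc, htc⟩) ⟨s₀, hs₀F⟩ := by
            rw [SimpleGraph.fromRel_adj]
            refine ⟨hs₀ne ⟨tc, htc⟩, Or.inl ⟨c, Finset.mem_inter.mpr ⟨?_, hcs₀⟩⟩⟩
            show c ∈ mapF tc
            simp only [hmapF]
            exact Finset.mem_map.mpr ⟨⟨c, hcSet⟩, hctc, rfl⟩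
          haveI : Nonempty ↥F := ⟨⟨s₀, hs₀F⟩⟩
          constructor
          intro a b
          have key : ∀ a : ↥F, (SimpleGraph.fromRel fun a b : ↥F =>
              ((a : Finset V) ∩ (b : Finset V)).Nonempty).Reachable a ⟨s₀, hs₀F⟩ := by
            intro a
            have ha2 : (a : Finset V) ∈ insert s₀ (F'.image mapF) := by
              rw [← hF]; exact a.2
            rcases Finset.mem_insert.mp ha2 with h | h
            · rw [show a = ⟨s₀, hs₀F⟩ from Subtype.ext h]
            · obtain ⟨t, ht, hta⟩ := Finset.mem_image.mp h
              have ha : a = φ ⟨t, ht⟩ := Subtype.ext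
                (show (a : Finset V) = ((φ ⟨t, ht⟩ : ↥F) : Finset V) from hta.symm)
              rw [ha]
              exact (hreach0 ⟨t, ht⟩).trans hedge.reachable
          exact (key a).trans (key b).symm

/-- Let `T` be a tree with `t ≥ 3` nodes. Then there exists a family of at most
`⌊t/2⌋` triplets (connected 3-node subtrees) covering all nodes of `T` such that the associated
triplets graph (triplets as vertices, edges between triplets sharing at least one node) is
connected. -/
theorem tree_triplet_cover_connected {V : Type} [Fintype V] [DecidableEq V]
    (G : SimpleGraph V) (hT : G.IsTree) (h3 : 3 ≤ Fintype.card V) :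
    ∃ F : Finset (Finset V),
      F.card ≤ Fintype.card V / 2 ∧
      (∀ s ∈ F, s.card = 3 ∧ (G.induce (↑s : Set V)).Connected) ∧
      (∀ v : V, ∃ s ∈ F, v ∈ s) ∧
      (SimpleGraph.fromRel (fun a b : ↥F => ((a : Finset V) ∩ (b : Finset V)).Nonempty)).Connected := by
  exact aux_main (Fintype.card V) V G hT h3 rfl
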